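/- arXiv:2110.04368 — 7 statements merged into one kernel-verified Lean document; each statement's English description precedes it below -/
import Mathlib

section
/- Let u : ℝ → ℝ be differentiable with derivative u' satisfying u' x > 0 for all x and u' strictly antitone (u strictly concave). Let π^P and π^A be probability vectors on Fin S with all entries positive, let λ > 0, and let w : Fin S → ℝ satisfy the first-best first-order condition π^P s = λ * π^A s * u' (w s) for every s. If π^P MLRP-dominates π^A, then w is monotone decreasing in s (s ≤ s' implies w s' ≤ w s). -/
/- STATEMENT 2: If the principal's beliefs MLRP-dominate the agent's, a contract
satisfying the first-best FOC is monotone decreasing in output. -/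
theorem stmt_2 {S : ℕ} (u u' : ℝ → ℝ)
    (hderiv : ∀ x, HasDerivAt u (u' x) x)
    (hpos : ∀ x, 0 < u' x) (hanti : StrictAnti u')
    (πP πA : Fin S → ℝ)
    (hPpos : ∀ s, 0 < πP s) (hPsum : ∑ s, πP s = 1)
    (hApos : ∀ s, 0 < πA s) (hAsum : ∑ s, πA s = 1)
    (lam : ℝ) (hlam : 0 < lam) (w : Fin S → ℝ)
    (hFOC : ∀ s, πP s = lam * πA s * u' (w s))
    (hMLRP : Monotone fun s => πP s / πA s) :
    ∀ s s' : Fin S, s ≤ s' → w s' ≤ w s := by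
  intro s s' h
  have hr : ∀ t, πP t / πA t = lam * u' (w t) := by
    intro t
    rw [hFOC t]
    field_simp [(hApos t).ne']
  have h1 : lam * u' (w s) ≤ lam * u' (w s') := by
    rw [← hr s, ← hr s']; exact hMLRP h
  have h2 : u' (w s) ≤ u' (w s') := le_of_mul_le_mul_left h1 hlam
  exact hanti.le_iff_ge.mp h2
end

section
/- Let u : ℝ → ℝ be differentiable with derivative u' satisfying u' x > 0 for all x and u' strictly antitone (u strictly concave). Let π^P and π^A be probability vectors on Fin S with all entries positive, let λ > 0, and let w : Fin S → ℝ satisfy the first-best first-order condition π^P s = λ * π^A s * u' (w s) for every s. If π^A MLRP-dominates π^P, then w is monotone increasing in s (s ≤ s' implies w s ≤ w s'). -/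
/- STATEMENT 3: If the agent's beliefs MLRP-dominate the principal's, a contract
satisfying the first-best FOC is monotone increasing in output. -/
theorem stmt_3 {S : ℕ} (u u' : ℝ → ℝ)
    (hderiv : ∀ x, HasDerivAt u (u' x) x)
    (hpos : ∀ x, 0 < u' x) (hanti : StrictAnti u')
    (πP πA : Fin S → ℝ)
    (hPpos : ∀ s, 0 < πP s) (hPsum : ∑ s, πP s = 1)
    (hApos : ∀ s, 0 < πA s) (hAsum : ∑ s, πA s = 1)
    (lam : ℝ) (hlam : 0 < lam) (w : Fin S → ℝ)
    (hFOC : ∀ s, πP s = lam * πA s * u' (w s))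
    (hMLRP : Monotone fun s => πA s / πP s) :
    ∀ s s' : Fin S, s ≤ s' → w s ≤ w s' := by
  intro s s' hss
  have key : ∀ t, u' (w t) = πP t / (lam * πA t) := by
    intro t
    have h := hFOC t
    field_simp [ne_of_gt hlam, ne_of_gt (hApos t)]
    linarith [h]
  by_contra h
  push_neg at h
  have h1 : u' (w s) < u' (w s') := hanti h
  rw [key s, key s'] at h1
  have hr : πA s / πP s ≤ πA s' / πP s' := hMLRP hss
  have h2 : πP s' / (lam * πA s') ≤ πP s / (lam * πA s) := by
    rw [div_le_div_iff₀ (mul_pos hlam (hApos _)) (mul_pos hlam (hApos _))]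
    rw [div_le_div_iff₀ (hPpos s) (hPpos s')] at hr
    nlinarith [hlam, hPpos s, hPpos s', hApos s, hApos s']
  linarith
end

section
/- Let the agent have CARA utility u x = -Real.exp (-x), let π^A and π^P be probability vectors on Fin S with all entries positive, and suppose ū + c < 0. Define w* : Fin S → ℝ by w* s = -Real.log (-(π^P s / π^A s) * (ū + c)). Then w* satisfies the individual rationality constraint with equality, ∑ s, π^A s * (-Real.exp (-(w* s))) = ū + c, and w* is the unique minimizer of ∑ s, π^P s * w s over all w : Fin S → ℝ satisfying ∑ s, π^A s * (-Real.exp (-(w s))) ≥ ū + c. -/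
/- STATEMENT 5: With CARA utility u(x) = -exp(-x), the first-best wage scheme
w* s = -log(-(πP s / πA s)(ū + c)) satisfies IR with equality and is the unique
minimizer of the principal's expected wage bill over the IR-feasible set. -/
theorem stmt_5 {S : ℕ} (πA πP : Fin S → ℝ)
    (hApos : ∀ s, 0 < πA s) (hAsum : ∑ s, πA s = 1)
    (hPpos : ∀ s, 0 < πP s) (hPsum : ∑ s, πP s = 1)
    (ubar c : ℝ) (hneg : ubar + c < 0)
    (wstar : Fin S → ℝ)
    (hwstar : ∀ s, wstar s = -Real.log (-(πP s / πA s) * (ubar + c))) :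
    ∑ s, πA s * (-Real.exp (-(wstar s))) = ubar + c ∧
    (∀ w : Fin S → ℝ, ∑ s, πA s * (-Real.exp (-(w s))) ≥ ubar + c →
      ∑ s, πP s * wstar s ≤ ∑ s, πP s * w s) ∧
    (∀ w : Fin S → ℝ, ∑ s, πA s * (-Real.exp (-(w s))) ≥ ubar + c →
      ∑ s, πP s * w s = ∑ s, πP s * wstar s → w = wstar) := by
  have hexp : ∀ s : Fin S, Real.exp (-(wstar s)) = πP s / πA s * (-(ubar + c)) := by
    intro s
    have hd : 0 < πP s / πA s := div_pos (hPpos s) (hApos s)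
    have hpos : 0 < -(πP s / πA s) * (ubar + c) := by nlinarith
    rw [hwstar s, neg_neg, Real.exp_log hpos]; ring
  have hkey : ∀ s : Fin S, πA s * Real.exp (-(wstar s)) = πP s * (-(ubar + c)) := by
    intro s
    rw [hexp s]
    field_simp [(hApos s).ne']
  have hIR : ∑ s, πA s * (-Real.exp (-(wstar s))) = ubar + c := by
    have h1 : ∑ s, πA s * (-Real.exp (-(wstar s))) = ∑ s, πP s * (ubar + c) := by
      refine Finset.sum_congr rfl fun s _ => ?_
      have := hkey s; nlinarith
    rw [h1, ← Finset.sum_mul, hPsum, one_mul]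
  have hterm : ∀ (w : Fin S → ℝ) (s : Fin S),
      πP s * (-(ubar + c)) * (wstar s - w s + 1) ≤ πA s * Real.exp (-(w s)) := by
    intro w s
    have h1 : wstar s - w s + 1 ≤ Real.exp (wstar s - w s) := by
      have := Real.add_one_le_exp (wstar s - w s); linarith
    have h2 : Real.exp (-(w s)) = Real.exp (-(wstar s)) * Real.exp (wstar s - w s) := by
      rw [← Real.exp_add]; ring_nf
    calc πP s * (-(ubar + c)) * (wstar s - w s + 1)
        = πA s * Real.exp (-(wstar s)) * (wstar s - w s + 1) := by rw [hkey s]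
      _ ≤ πA s * Real.exp (-(wstar s)) * Real.exp (wstar s - w s) := by
          exact mul_le_mul_of_nonneg_left h1
            (mul_nonneg (hApos s).le (Real.exp_pos _).le)
      _ = πA s * Real.exp (-(w s)) := by rw [h2]; ring
  have expand : ∀ w : Fin S → ℝ,
      (-(ubar + c)) * ((∑ s, πP s * wstar s) - (∑ s, πP s * w s) + 1)
        = ∑ s, πP s * (-(ubar + c)) * (wstar s - w s + 1) := by
    intro w
    conv_lhs => rw [← hPsum]
    rw [← Finset.sum_sub_distrib, ← Finset.sum_add_distrib, Finset.mul_sum]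
    exact Finset.sum_congr rfl fun s _ => by ring
  have hcon : ∀ w : Fin S → ℝ, ∑ s, πA s * (-Real.exp (-(w s))) ≥ ubar + c →
      ∑ s, πA s * Real.exp (-(w s)) ≤ -(ubar + c) := by
    intro w hw
    have : ∑ s, πA s * (-Real.exp (-(w s))) = -∑ s, πA s * Real.exp (-(w s)) := by
      rw [← Finset.sum_neg_distrib]
      exact Finset.sum_congr rfl fun s _ => by ring
    rw [this] at hw; linarith
  have hopt : ∀ w : Fin S → ℝ, ∑ s, πA s * (-Real.exp (-(w s))) ≥ ubar + c →
      ∑ s, πP s * wstar s ≤ ∑ s, πP s * w s := by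
    intro w hw
    have h1 : ∑ s, πP s * (-(ubar + c)) * (wstar s - w s + 1)
        ≤ ∑ s, πA s * Real.exp (-(w s)) :=
      Finset.sum_le_sum fun s _ => hterm w s
    have h2 := hcon w hw
    have h3 : (-(ubar + c)) * ((∑ s, πP s * wstar s) - (∑ s, πP s * w s) + 1)
        ≤ -(ubar + c) := by rw [expand w]; linarith
    nlinarith [h3]
  refine ⟨hIR, hopt, ?_⟩
  intro w hw heq
  have h1 : ∑ s, (πA s * Real.exp (-(w s)) - πP s * (-(ubar + c)) * (wstar s - w s + 1)) = 0 := by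
    have hle : ∑ s, (πA s * Real.exp (-(w s)) - πP s * (-(ubar + c)) * (wstar s - w s + 1)) ≤ 0 := by
      rw [Finset.sum_sub_distrib, ← expand w, heq]
      have := hcon w hw
      nlinarith
    have hge : 0 ≤ ∑ s, (πA s * Real.exp (-(w s)) - πP s * (-(ubar + c)) * (wstar s - w s + 1)) :=
      Finset.sum_nonneg fun s _ => by linarith [hterm w s]
    linarith
  have h2 := (Finset.sum_eq_zero_iff_of_nonneg
    (fun s _ => by linarith [hterm w s])).mp h1
  funext s
  have h3 : πA s * Real.exp (-(w s)) = πP s * (-(ubar + c)) * (wstar s - w s + 1) := by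
    have := h2 s (Finset.mem_univ s); linarith
  rw [← hkey s] at h3
  have hA := hApos s
  have h4 : Real.exp (-(w s)) = Real.exp (-(wstar s)) * (wstar s - w s + 1) := by
    rw [mul_assoc] at h3
    exact mul_left_cancel₀ hA.ne' h3
  have h5 : Real.exp (-(w s)) = Real.exp (-(wstar s)) * Real.exp (wstar s - w s) := by
    rw [← Real.exp_add]; ring_nf
  have h6 : Real.exp (wstar s - w s) = wstar s - w s + 1 :=
    mul_left_cancel₀ (Real.exp_pos (-(wstar s))).ne' (h5.symm.trans h4)
  by_contra hne
  have hne' : wstar s - w s ≠ 0 := fun h => hne (sub_eq_zero.mp h).symm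
  have := Real.add_one_lt_exp hne'
  linarith
end

section
/- Let the agent have CARA utility u x = -Real.exp (-x) and let the state space be Fin 3, with π^A and π^P probability vectors with all entries positive and ū + c < 0. Let π̃^P be obtained from π^P by an ε-reallocation between states 2 and 3: π̃^P 1 = π^P 1, π̃^P 2 = π^P 2 + ε, π̃^P 3 = π^P 3 - ε, where 0 < ε < π^P 3. If w* is the minimizer of ∑ s, π^P s * w s subject to ∑ s, π^A s * (-Real.exp (-(w s))) ≥ ū + c, and w̃* is the minimizer of the same problem with π̃^P in place of π^P, then w̃* 2 < w* 2, w̃* 3 > w* 3, and w̃* 1 = w* 1. -/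
/-- Any minimizer of the first-best problem equals the closed form. -/
lemma fb_minimizer_eq (πA πP : Fin 3 → ℝ)
    (hApos : ∀ s, 0 < πA s) (hPpos : ∀ s, 0 < πP s) (hPsum : ∑ s, πP s = 1)
    (K : ℝ) (hK : 0 < K) (w : Fin 3 → ℝ)
    (hfeas : ∑ s, πA s * (-Real.exp (-(w s))) ≥ -K)
    (hmin : ∀ v : Fin 3 → ℝ, ∑ s, πA s * (-Real.exp (-(v s))) ≥ -K →
      ∑ s, πP s * w s ≤ ∑ s, πP s * v s) :
    ∀ s, w s = -Real.log (πP s / πA s * K) := by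
  set w0 : Fin 3 → ℝ := fun s => -Real.log (πP s / πA s * K) with hw0
  have hpos : ∀ s, 0 < πP s / πA s * K := fun s =>
    mul_pos (div_pos (hPpos s) (hApos s)) hK
  have hexp0 : ∀ s, Real.exp (-(w0 s)) = πP s / πA s * K := by
    intro s; simp only [hw0, neg_neg]; exact Real.exp_log (hpos s)
  have hA0 : ∀ s, πA s * Real.exp (-(w0 s)) = πP s * K := by
    intro s; rw [hexp0 s]
    have h := (hApos s).ne'
    field_simp
  have hfeas0 : ∑ s, πA s * (-Real.exp (-(w0 s))) ≥ -K := by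
    have h : ∀ s, πA s * (-Real.exp (-(w0 s))) = -(πP s * K) := by
      intro s; rw [← hA0 s]; ring
    rw [Fin.sum_univ_three] at hPsum ⊢
    rw [h 0, h 1, h 2]; nlinarith
  have hle := hmin w0 hfeas0
  -- pointwise tangent bound
  have hterm : ∀ s, πA s * Real.exp (-(w s)) ≥ πP s * K * (1 + w0 s - w s) := by
    intro s
    have h1 : (w0 s - w s) + 1 ≤ Real.exp (w0 s - w s) := Real.add_one_le_exp _
    have h3 : πA s * Real.exp (-(w s)) = πP s * K * Real.exp (w0 s - w s) := by
      rw [show Real.exp (-(w s)) = Real.exp (-(w0 s)) * Real.exp (w0 s - w s) by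
        rw [← Real.exp_add]; ring_nf, ← mul_assoc, hA0 s]
    rw [h3]
    have hPK : 0 < πP s * K := mul_pos (hPpos s) hK
    nlinarith
  simp only [Fin.sum_univ_three] at hfeas hle hPsum
  have ht0 := hterm 0; have ht1 := hterm 1; have ht2 := hterm 2
  have hKsum : (πP 0 + πP 1 + πP 2) * K = K := by rw [hPsum, one_mul]
  have hSle : 0 ≤ K * ((πP 0 * w0 0 + πP 1 * w0 1 + πP 2 * w0 2)
      - (πP 0 * w 0 + πP 1 * w 1 + πP 2 * w 2)) :=
    mul_nonneg hK.le (by linarith)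
  have heq : ∀ s, πA s * Real.exp (-(w s)) = πP s * K * (1 + w0 s - w s) := by
    intro s
    refine le_antisymm ?_ (hterm s)
    have key0 : πA 0 * Real.exp (-(w 0)) ≤ πP 0 * K * (1 + w0 0 - w 0) := by
      nlinarith [ht1, ht2, hKsum, hSle, hfeas]
    have key1 : πA 1 * Real.exp (-(w 1)) ≤ πP 1 * K * (1 + w0 1 - w 1) := by
      nlinarith [ht0, ht2, hKsum, hSle, hfeas]
    have key2 : πA 2 * Real.exp (-(w 2)) ≤ πP 2 * K * (1 + w0 2 - w 2) := by
      nlinarith [ht0, ht1, hKsum, hSle, hfeas]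
    fin_cases s
    · exact key0
    · exact key1
    · exact key2
  intro s
  have h3 : πA s * Real.exp (-(w s)) = πP s * K * Real.exp (w0 s - w s) := by
    rw [show Real.exp (-(w s)) = Real.exp (-(w0 s)) * Real.exp (w0 s - w s) by
      rw [← Real.exp_add]; ring_nf, ← mul_assoc, hA0 s]
  have hPK : 0 < πP s * K := mul_pos (hPpos s) hK
  have hexp_eq : Real.exp (w0 s - w s) = 1 + (w0 s - w s) := by
    have h := heq s
    rw [h3] at h
    have h' := mul_left_cancel₀ (ne_of_gt hPK) h
    linarith
  have hzero : w0 s - w s = 0 := by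
    by_contra h
    have := Real.add_one_lt_exp h
    linarith
  show w s = w0 s
  linarith

theorem stmt_6 (πA πP : Fin 3 → ℝ)
    (hApos : ∀ s, 0 < πA s) (hAsum : ∑ s, πA s = 1)
    (hPpos : ∀ s, 0 < πP s) (hPsum : ∑ s, πP s = 1)
    (ubar c : ℝ) (hneg : ubar + c < 0)
    (ε : ℝ) (hε0 : 0 < ε) (hεtop : ε < πP 2)
    (πtP : Fin 3 → ℝ) (hπt : πtP = ![πP 0, πP 1 + ε, πP 2 - ε])
    (wstar wtstar : Fin 3 → ℝ)
    (hwfeas : ∑ s, πA s * (-Real.exp (-(wstar s))) ≥ ubar + c)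
    (hwmin : ∀ w : Fin 3 → ℝ, ∑ s, πA s * (-Real.exp (-(w s))) ≥ ubar + c →
      ∑ s, πP s * wstar s ≤ ∑ s, πP s * w s)
    (hwtfeas : ∑ s, πA s * (-Real.exp (-(wtstar s))) ≥ ubar + c)
    (hwtmin : ∀ w : Fin 3 → ℝ, ∑ s, πA s * (-Real.exp (-(w s))) ≥ ubar + c →
      ∑ s, πtP s * wtstar s ≤ ∑ s, πtP s * w s) :
    wtstar 1 < wstar 1 ∧ wstar 2 < wtstar 2 ∧ wtstar 0 = wstar 0 := by
  set K := -(ubar + c) with hKdef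
  have hK : 0 < K := by simp [hKdef]; linarith
  have hKc : ubar + c = -K := by simp [hKdef]
  rw [hKc] at hwfeas hwmin hwtfeas hwtmin
  have htpos : ∀ s, 0 < πtP s := by
    intro s; fin_cases s <;> simp [hπt] <;>
      first | exact hPpos 0 | linarith [hPpos 1] | linarith [hPpos 2]
  have htsum : ∑ s, πtP s = 1 := by
    rw [Fin.sum_univ_three] at hPsum ⊢
    simp [hπt]; linarith
  have h1 := fb_minimizer_eq πA πP hApos hPpos hPsum K hK wstar hwfeas hwmin
  have h2 := fb_minimizer_eq πA πtP hApos htpos htsum K hK wtstar hwtfeas hwtmin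
  have ht0 : πtP 0 = πP 0 := by simp [hπt]
  have ht1 : πtP 1 = πP 1 + ε := by simp [hπt]
  have ht2 : πtP 2 = πP 2 - ε := by simp [hπt]
  refine ⟨?_, ?_, ?_⟩
  · rw [h1 1, h2 1, ht1, neg_lt_neg_iff]
    apply Real.log_lt_log (mul_pos (div_pos (hPpos 1) (hApos 1)) hK)
    exact mul_lt_mul_of_pos_right ((div_lt_div_iff_of_pos_right (hApos 1)).mpr (by linarith)) hK
  · rw [h1 2, h2 2, ht2, neg_lt_neg_iff]
    have hnum : (0:ℝ) < πP 2 - ε := by linarith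
    apply Real.log_lt_log (mul_pos (div_pos hnum (hApos 2)) hK)
    exact mul_lt_mul_of_pos_right ((div_lt_div_iff_of_pos_right (hApos 2)).mpr (by linarith)) hK
  · rw [h1 0, h2 0, ht0]
end

section
/- Let h : ℝ → ℝ be strictly increasing, let δ and π be probability vectors on Fin S with all entries positive, let η be a probability vector on Fin S, and let ū, c, c' ∈ ℝ. If v : Fin S → ℝ minimizes ∑ s, δ s * h (v s) over the set {v : ∑ s, π s * v s ≥ ū + c ∧ ∑ s, (π s - η s) * v s ≥ c'}, then the individual rationality constraint binds: ∑ s, π s * v s = ū + c. -/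
/- STATEMENT 7: In the second-best problem in promised-utility space, the individual
rationality constraint binds at any cost-minimizing contract. -/
theorem stmt_7 {S : ℕ} (h : ℝ → ℝ) (hmono : StrictMono h)
    (δ π η : Fin S → ℝ)
    (hδpos : ∀ s, 0 < δ s) (hδsum : ∑ s, δ s = 1)
    (hπpos : ∀ s, 0 < π s) (hπsum : ∑ s, π s = 1)
    (hηnn : ∀ s, 0 ≤ η s) (hηsum : ∑ s, η s = 1)
    (ubar c c' : ℝ) (v : Fin S → ℝ)
    (hIR : ∑ s, π s * v s ≥ ubar + c)
    (hIC : ∑ s, (π s - η s) * v s ≥ c')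
    (hmin : ∀ v' : Fin S → ℝ,
      (∑ s, π s * v' s ≥ ubar + c ∧ ∑ s, (π s - η s) * v' s ≥ c') →
      ∑ s, δ s * h (v s) ≤ ∑ s, δ s * h (v' s)) :
    ∑ s, π s * v s = ubar + c := by
  by_contra hne
  have hslack : ∑ s, π s * v s > ubar + c := lt_of_le_of_ne hIR (Ne.symm hne)
  set ε : ℝ := ∑ s, π s * v s - (ubar + c) with hε
  have hεpos : 0 < ε := by simp [hε]; linarith
  have hSne : Nonempty (Fin S) := by
    by_contra hS
    simp [Finset.univ_eq_empty_iff.mpr (not_nonempty_iff.mp hS)] at hδsum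
  set v' : Fin S → ℝ := fun s => v s - ε with hv'
  have h1 : ∑ s, π s * v' s = ubar + c := by
    simp only [hv', mul_sub, Finset.sum_sub_distrib, ← Finset.sum_mul, hπsum]
    ring
  have h0 : ∑ s, (π s - η s) = 0 := by
    rw [Finset.sum_sub_distrib, hπsum, hηsum]; ring
  have h2 : ∑ s, (π s - η s) * v' s ≥ c' := by
    have : ∑ s, (π s - η s) * v' s = ∑ s, (π s - η s) * v s - (∑ s, (π s - η s)) * ε := by
      simp only [hv', mul_sub, Finset.sum_sub_distrib, Finset.sum_mul, Finset.sum_sub_distrib]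
      rw [← Finset.sum_mul, Finset.sum_sub_distrib]
    rw [this, h0]; linarith
  have hle := hmin v' ⟨le_of_eq h1.symm, h2⟩
  have hlt : ∑ s, δ s * h (v' s) < ∑ s, δ s * h (v s) := by
    apply Finset.sum_lt_sum_of_nonempty (Finset.univ_nonempty)
    intro s _
    exact mul_lt_mul_of_pos_left (hmono (by simp [hv']; linarith)) (hδpos s)
  linarith
end

section
/- Let u : ℝ → ℝ be differentiable with derivative u' satisfying u' x > 0 for all x and u' strictly antitone (u strictly concave). Let π^P(H), π^A(H), and π^A(L) be probability vectors on Fin S with π^P(H) having all entries positive, let λ > 0 and μ ≥ 0, and let w : Fin S → ℝ satisfy the second-best first-order condition 1 = (λ * (π^A(H) s / π^P(H) s) + μ * ((π^A(H) s - π^A(L) s) / π^P(H) s)) * u' (w s) for every s. If both likelihood ratios s ↦ π^A(H) s / π^P(H) s and s ↦ (π^A(H) s - π^A(L) s) / π^P(H) s are monotone increasing in s, then w is monotone increasing in s. -/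
/- STATEMENT 9 (Proposition 3(1)): if both likelihood ratios appearing in the
second-best FOC are increasing in the state, the optimal wage scheme is increasing. -/
theorem stmt_9 {S : ℕ} (u u' : ℝ → ℝ)
    (hderiv : ∀ x, HasDerivAt u (u' x) x)
    (hpos : ∀ x, 0 < u' x) (hanti : StrictAnti u')
    (πPH πAH πAL : Fin S → ℝ)
    (hPpos : ∀ s, 0 < πPH s) (hPsum : ∑ s, πPH s = 1)
    (hAHnn : ∀ s, 0 ≤ πAH s) (hAHsum : ∑ s, πAH s = 1)
    (hALnn : ∀ s, 0 ≤ πAL s) (hALsum : ∑ s, πAL s = 1)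
    (lam mu : ℝ) (hlam : 0 < lam) (hmu : 0 ≤ mu)
    (w : Fin S → ℝ)
    (hFOC : ∀ s, 1 =
      (lam * (πAH s / πPH s) + mu * ((πAH s - πAL s) / πPH s)) * u' (w s))
    (hLR1 : Monotone fun s => πAH s / πPH s)
    (hLR2 : Monotone fun s => (πAH s - πAL s) / πPH s) :
    Monotone w := by
  set c : Fin S → ℝ := fun s =>
    lam * (πAH s / πPH s) + mu * ((πAH s - πAL s) / πPH s) with hc
  have hcpos : ∀ s, 0 < c s := by
    intro s
    by_contra h
    push_neg at h
    have h0 : 1 = c s * u' (w s) := hFOC s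
    nlinarith [hpos (w s), mul_nonpos_of_nonpos_of_nonneg h (le_of_lt (hpos (w s)))]
  have hcmono : Monotone c := fun s t hst => by
    have h1 := hLR1 hst
    have h2 := hLR2 hst
    simp only at h1 h2
    have := hmu
    dsimp [c]
    nlinarith
  intro s t hst
  by_contra h
  push_neg at h
  have hu : u' (w s) < u' (w t) := hanti h
  have h1 : 1 = c s * u' (w s) := hFOC s
  have h2 : 1 = c t * u' (w t) := hFOC t
  nlinarith [hcpos s, hcpos t, hcmono hst, hpos (w s), hpos (w t)]
end

section
/- Let π and η be probability vectors on Fin S (S ≥ 2) with all entries positive, suppose π MLRP-dominates η, and suppose π ≠ η. Then π 0 < η 0 (the likelihood ratio at the lowest state is strictly below 1) and π (S-1) > η (S-1) (the likelihood ratio at the highest state is strictly above 1). -/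
/- STATEMENT 10: if π MLRP-dominates η and π ≠ η, then at the lowest state π < η and
at the highest state π > η. -/
theorem stmt_10 {S : ℕ} (hS : 2 ≤ S) (π η : Fin S → ℝ)
    (hπpos : ∀ s, 0 < π s) (hπsum : ∑ s, π s = 1)
    (hηpos : ∀ s, 0 < η s) (hηsum : ∑ s, η s = 1)
    (hMLRP : Monotone fun s => π s / η s) (hne : π ≠ η) :
    π ⟨0, by omega⟩ < η ⟨0, by omega⟩ ∧
      η ⟨S - 1, by omega⟩ < π ⟨S - 1, by omega⟩ := by
  set lo : Fin S := ⟨0, by omega⟩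
  set hi : Fin S := ⟨S - 1, by omega⟩
  have hlo : ∀ s : Fin S, lo ≤ s := fun s => Fin.mk_le_of_le_val (Nat.zero_le _)
  have hhi : ∀ s : Fin S, s ≤ hi := fun s => by
    have := s.isLt; exact Fin.le_def.mpr (by simp [hi]; omega)
  constructor
  · by_contra h
    push_neg at h
    have hr : ∀ s, η s ≤ π s := by
      intro s
      have h1 : (1 : ℝ) ≤ π lo / η lo := (one_le_div (hηpos lo)).2 h
      have h2 : (1 : ℝ) ≤ π s / η s := h1.trans (hMLRP (hlo s))
      exact (one_le_div (hηpos s)).1 h2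
    have : ∀ s ∈ Finset.univ, η s = π s := by
      rw [← Finset.sum_eq_sum_iff_of_le (fun s _ => hr s)]
      rw [hπsum, hηsum]
    exact hne (funext fun s => ((this s (Finset.mem_univ s)).symm))
  · by_contra h
    push_neg at h
    have hr : ∀ s, π s ≤ η s := by
      intro s
      have h1 : π hi / η hi ≤ 1 := (div_le_one (hηpos hi)).2 h
      have h2 : π s / η s ≤ 1 := (hMLRP (hhi s)).trans h1
      exact (div_le_one (hηpos s)).1 h2
    have : ∀ s ∈ Finset.univ, π s = η s := by
      rw [← Finset.sum_eq_sum_iff_of_le (fun s _ => hr s)]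
      rw [hπsum, hηsum]
    exact hne (funext fun s => this s (Finset.mem_univ s))
end
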